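/- Let Y be a discrete log-concave random variable on ℤ with p.m.f. p, unbounded above, and let r* = lim_{k→∞} p(k+1)/p(k) ∈ [0,1). Then the survival probabilities S(k) = P(Y ≥ k) satisfy p(k)/(1-r*) ≤ S(k) ≤ p(k)/(1 - p(k+1)/p(k)) for all k in the support, and consequently S(k) ~ p(k)/(1-r*) as k → ∞. -/

import Mathlib

open Filter

/-- For a discrete log-concave p.m.f. `p` on `ℤ`, unbounded above, with ratio
limit `r* = lim p(k+1)/p(k) ∈ [0,1)`, the survival function `S(k) = P(Y ≥ k)`
satisfies `p(k)/(1-r*) ≤ S(k)` and `S(k) (1 - p(k+1)/p(k)) ≤ p(k)` on the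
support, and `S(k) ~ p(k)/(1-r*)` as `k → ∞`. -/
theorem survival_asymptotics (p : ℤ → ℝ)
    (hp0 : ∀ k, 0 ≤ p k) (hpsum : HasSum p 1)
    (hsupp : ∀ a b c : ℤ, a ≤ b → b ≤ c → 0 < p a → 0 < p c → 0 < p b)
    (hlc : ∀ k : ℤ, p (k - 1) * p (k + 1) ≤ p k ^ 2)
    (hub : ∀ k : ℤ, ∃ m : ℤ, k ≤ m ∧ 0 < p m)
    (r : ℝ) (hr0 : 0 ≤ r) (hr1 : r < 1)
    (hr : Tendsto (fun k : ℤ => p (k + 1) / p k) atTop (nhds r)) :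
    (∀ k : ℤ, 0 < p k →
        p k / (1 - r) ≤ (∑' m : ℕ, p (k + m)) ∧
        (∑' m : ℕ, p (k + m)) * (1 - p (k + 1) / p k) ≤ p k) ∧
      Tendsto (fun k : ℤ => (∑' m : ℕ, p (k + m)) * (1 - r) / p k) atTop (nhds 1) := by
  have hr1' : (0:ℝ) < 1 - r := by linarith
  have hmono : ∀ k m : ℤ, k ≤ m → 0 < p k → 0 < p m := by
    intro k m hkm hk
    obtain ⟨c, hc1, hc2⟩ := hub m
    exact hsupp k m c hkm hc1 hk hc2
  set q : ℤ → ℝ := fun k => p (k + 1) / p k with hqdef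
  -- ratios are antitone on the support
  have hanti : ∀ k : ℤ, 0 < p k → ∀ l, k ≤ l → q l ≤ q k := by
    intro k hk
    refine Int.le_induction le_rfl ?_
    intro l hkl ih
    · have h1 : 0 < p l := hmono k l hkl hk
      have h2 : 0 < p (l + 1) := hmono k (l + 1) (by omega) hk
      have hlc' := hlc (l + 1)
      have e1 : l + 1 - 1 = l := by ring
      have e2 : l + 1 + 1 = l + 2 := by ring
      rw [e1, e2] at hlc'
      have hstep : q (l + 1) ≤ q l := by
        rw [hqdef]
        dsimp only
        rw [e2, div_le_div_iff₀ h2 h1]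
        nlinarith
      exact hstep.trans ih
  have hrle : ∀ k : ℤ, 0 < p k → r ≤ q k := by
    intro k hk
    exact le_of_tendsto hr (eventually_atTop.2 ⟨k, fun l hl => hanti k hk l hl⟩)
  have hq0 : ∀ k : ℤ, 0 ≤ q k := fun k => div_nonneg (hp0 _) (hp0 _)
  -- geometric lower bound
  have hlow : ∀ k : ℤ, 0 < p k → ∀ m : ℕ, p k * r ^ m ≤ p (k + m) := by
    intro k hk m
    induction m with
    | zero => simp
    | succ m ih =>
      have h1 : 0 < p (k + m) := hmono k _ (by omega) hk
      have h2 : r ≤ q (k + m) := hrle _ h1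
      have hqe : p (k + m) * q (k + m) = p (k + (m + 1 : ℕ)) := by
        rw [hqdef]
        dsimp only
        rw [mul_div_cancel₀ _ h1.ne']
        congr 1
        push_cast
        ring
      calc p k * r ^ (m + 1) = (p k * r ^ m) * r := by ring
        _ ≤ p (k + m) * r := mul_le_mul_of_nonneg_right ih hr0
        _ ≤ p (k + m) * q (k + m) := mul_le_mul_of_nonneg_left h2 h1.le
        _ = p (k + (m + 1 : ℕ)) := hqe
  -- geometric upper bound
  have hhigh : ∀ k : ℤ, 0 < p k → ∀ m : ℕ, p (k + m) ≤ p k * (q k) ^ m := by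
    intro k hk m
    induction m with
    | zero => simp
    | succ m ih =>
      have h1 : 0 < p (k + m) := hmono k _ (by omega) hk
      have h2 : q (k + m) ≤ q k := hanti k hk _ (by omega)
      have hqe : p (k + m) * q (k + m) = p (k + (m + 1 : ℕ)) := by
        rw [hqdef]
        dsimp only
        rw [mul_div_cancel₀ _ h1.ne']
        congr 1
        push_cast
        ring
      calc p (k + (m + 1 : ℕ)) = p (k + m) * q (k + m) := hqe.symm
        _ ≤ p (k + m) * q k := mul_le_mul_of_nonneg_left h2 h1.le
        _ ≤ (p k * q k ^ m) * q k := mul_le_mul_of_nonneg_right ih (hq0 k)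
        _ = p k * q k ^ (m + 1) := by ring
  have hinj : ∀ k : ℤ, Function.Injective (fun m : ℕ => k + (m : ℤ)) := by
    intro k m n h
    simp only at h
    omega
  have hS : ∀ k : ℤ, Summable (fun m : ℕ => p (k + m)) := fun k =>
    hpsum.summable.comp_injective (hinj k)
  have hSnn : ∀ k : ℤ, 0 ≤ ∑' m : ℕ, p (k + m) := fun k =>
    tsum_nonneg fun m => hp0 _
  -- tsum lower bound
  have hSlow : ∀ k : ℤ, 0 < p k → p k / (1 - r) ≤ ∑' m : ℕ, p (k + m) := by
    intro k hk
    have hg : Summable (fun m : ℕ => p k * r ^ m) :=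
      (summable_geometric_of_lt_one hr0 hr1).mul_left _
    have := Summable.tsum_le_tsum (hlow k hk) hg (hS k)
    rwa [tsum_mul_left, tsum_geometric_of_lt_one hr0 hr1, ← div_eq_mul_inv] at this
  -- tsum upper bound when q k < 1
  have hShigh : ∀ k : ℤ, 0 < p k → q k < 1 → (∑' m : ℕ, p (k + m)) ≤ p k / (1 - q k) := by
    intro k hk hk1
    have hg : Summable (fun m : ℕ => p k * (q k) ^ m) :=
      (summable_geometric_of_lt_one (hq0 k) hk1).mul_left _
    have := Summable.tsum_le_tsum (hhigh k hk) (hS k) hg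
    rwa [tsum_mul_left, tsum_geometric_of_lt_one (hq0 k) hk1, ← div_eq_mul_inv] at this
  have hmain : ∀ k : ℤ, 0 < p k →
      p k / (1 - r) ≤ (∑' m : ℕ, p (k + m)) ∧
      (∑' m : ℕ, p (k + m)) * (1 - p (k + 1) / p k) ≤ p k := by
    intro k hk
    refine ⟨hSlow k hk, ?_⟩
    rcases lt_or_ge (q k) 1 with h1 | h1
    · have := hShigh k hk h1
      have h2 : (0:ℝ) < 1 - q k := by linarith
      calc (∑' m : ℕ, p (k + m)) * (1 - p (k + 1) / p k)
          = (∑' m : ℕ, p (k + m)) * (1 - q k) := rfl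
        _ ≤ (p k / (1 - q k)) * (1 - q k) := mul_le_mul_of_nonneg_right this h2.le
        _ = p k := div_mul_cancel₀ _ h2.ne'
    · have h2 : 1 - p (k + 1) / p k ≤ 0 := by
        have : 1 - q k ≤ 0 := by linarith
        exact this
      exact (mul_nonpos_of_nonneg_of_nonpos (hSnn k) h2).trans (hp0 k)
  refine ⟨hmain, ?_⟩
  obtain ⟨a, ha⟩ : ∃ a, 0 < p a := by
    by_contra h
    push_neg at h
    have hz : p = fun _ => 0 := funext fun k => le_antisymm (h k) (hp0 k)
    rw [hz] at hpsum
    simpa using hpsum.unique hasSum_zero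
  have hev : ∀ᶠ k : ℤ in atTop, 0 < p k ∧ q k < 1 :=
    (eventually_atTop.2 ⟨a, fun k hk => hmono a k hk ha⟩).and (hr.eventually_lt_const hr1)
  have htend : Tendsto (fun k : ℤ => (1 - r) / (1 - q k)) atTop (nhds 1) := by
    have h1 : Tendsto (fun k : ℤ => (1 : ℝ) - q k) atTop (nhds (1 - r)) :=
      tendsto_const_nhds.sub hr
    have := (tendsto_const_nhds (x := (1:ℝ) - r) (f := atTop (α := ℤ))).div h1 hr1'.ne'
    rw [div_self hr1'.ne'] at this
    exact this
  refine tendsto_of_tendsto_of_tendsto_of_le_of_le' (g := fun _ => (1:ℝ))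
    (h := fun k : ℤ => (1 - r) / (1 - q k)) tendsto_const_nhds htend ?_ ?_
  · filter_upwards [hev] with k hk
    obtain ⟨hk, hk1⟩ := hk
    have := hSlow k hk
    rw [le_div_iff₀ hk]
    calc 1 * p k = (p k / (1 - r)) * (1 - r) := by field_simp
      _ ≤ (∑' m : ℕ, p (k + m)) * (1 - r) := mul_le_mul_of_nonneg_right this hr1'.le
  · filter_upwards [hev] with k hk
    obtain ⟨hk, hk1⟩ := hk
    have h2 : (0:ℝ) < 1 - q k := by linarith
    have hup := hShigh k hk hk1
    rw [div_le_div_iff₀ hk h2]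
    calc (∑' m : ℕ, p (k + m)) * (1 - r) * (1 - q k)
        ≤ (p k / (1 - q k)) * (1 - r) * (1 - q k) := by
          have := mul_le_mul_of_nonneg_right hup hr1'.le
          exact mul_le_mul_of_nonneg_right this h2.le
      _ = (1 - r) * p k := by field_simp
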